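/- For any two density matrices ρ and σ of the same size, dist(ρ,σ) ≤ √(1 − F(ρ,σ)²); that is, the trace distance is at most the square root of one minus the squared fidelity. (Second inequality of Lemma on fidelity/trace-distance relations, item 1.) -/

import Mathlib

open scoped Matrix ComplexOrder

/-- The positive semidefinite square root of a matrix (junk value `0` if the matrix is not
positive semidefinite). -/
noncomputable def psdSqrt {m : ℕ} (A : Matrix (Fin m) (Fin m) ℂ) : Matrix (Fin m) (Fin m) ℂ :=
  letI := Classical.dec A.PosSemidef
  if h : A.PosSemidef then
    (h.1.eigenvectorUnitary : Matrix (Fin m) (Fin m) ℂ) *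
      Matrix.diagonal ((↑) ∘ Real.sqrt ∘ h.1.eigenvalues) *
      (star (h.1.eigenvectorUnitary : Matrix (Fin m) (Fin m) ℂ)) else 0

/-- The fidelity `F(ρ,σ) = tr √(√ρ · σ · √ρ)` of two density matrices. -/
noncomputable def fidelity {m : ℕ} (ρ σ : Matrix (Fin m) (Fin m) ℂ) : ℝ :=
  ((psdSqrt (psdSqrt ρ * σ * psdSqrt ρ)).trace).re

/-- The trace distance `dist(ρ,σ) = (1/2)·tr √((ρ−σ)†(ρ−σ))` of two density matrices. -/
noncomputable def traceDist {m : ℕ} (ρ σ : Matrix (Fin m) (Fin m) ℂ) : ℝ :=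
  (1 / 2) * ((psdSqrt ((ρ - σ)ᴴ * (ρ - σ))).trace).re

namespace FvG

open Matrix
open scoped MatrixOrder

variable {m : ℕ}

lemma psdSqrt_eq {A : Matrix (Fin m) (Fin m) ℂ} (h : A.PosSemidef) : psdSqrt A = CFC.sqrt A := by
  rw [psdSqrt, dif_pos h, CFC.sqrt_eq_cfc, cfc_nnreal_eq_real _ A h.nonneg, h.1.cfc_eq]
  simp only [IsHermitian.cfc, Real.coe_sqrt, Real.coe_toNNReal', Unitary.conjStarAlgAut_apply]
  congr 3
  funext i
  simp [max_eq_left (h.eigenvalues_nonneg i)]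

lemma psdSqrt_posSemidef {A : Matrix (Fin m) (Fin m) ℂ} (h : A.PosSemidef) :
    (psdSqrt A).PosSemidef := by
  rw [psdSqrt_eq h]; exact (CFC.sqrt_nonneg A).posSemidef

lemma psdSqrt_mul_self {A : Matrix (Fin m) (Fin m) ℂ} (h : A.PosSemidef) :
    psdSqrt A * psdSqrt A = A := by
  rw [psdSqrt_eq h]; exact CFC.sqrt_mul_sqrt_self A h.nonneg

lemma trace_re_nonneg {A : Matrix (Fin m) (Fin m) ℂ} (h : A.PosSemidef) : 0 ≤ A.trace.re := by
  rw [Matrix.trace, Complex.re_sum]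
  refine Finset.sum_nonneg fun i _ => ?_
  exact (Complex.le_def.mp (h.diag_nonneg (i := i))).1

lemma hermIdem_posSemidef {P : Matrix (Fin m) (Fin m) ℂ} (h1 : Pᴴ = P) (h2 : P * P = P) :
    P.PosSemidef := by
  have := Matrix.posSemidef_conjTranspose_mul_self P
  rwa [h1, h2] at this

lemma one_sub_hermIdem_posSemidef {P : Matrix (Fin m) (Fin m) ℂ} (h1 : Pᴴ = P)
    (h2 : P * P = P) : ((1 : Matrix (Fin m) (Fin m) ℂ) - P).PosSemidef := by
  refine hermIdem_posSemidef ?_ ?_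
  · rw [Matrix.conjTranspose_sub, h1, Matrix.conjTranspose_one]
  · rw [Matrix.sub_mul, Matrix.mul_sub, Matrix.mul_sub, h2]
    simp

/-- trace of product of PSD matrices is nonneg -/
lemma trace_mul_psd_re_nonneg {B C : Matrix (Fin m) (Fin m) ℂ} (hB : B.PosSemidef)
    (hC : C.PosSemidef) : 0 ≤ (B * C).trace.re := by
  have hs := psdSqrt_mul_self hB
  have hsh : (psdSqrt B)ᴴ = psdSqrt B := (psdSqrt_posSemidef hB).1
  have : (B * C).trace = (psdSqrt B * C * psdSqrt B).trace := by
    rw [Matrix.trace_mul_cycle, hs]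
  rw [this]
  refine trace_re_nonneg ?_
  have := hC.conjTranspose_mul_mul_same (psdSqrt B)
  rwa [hsh] at this

/-- contraction decreases trace against PSD -/
lemma trace_contract {B C : Matrix (Fin m) (Fin m) ℂ} (hB : B.PosSemidef)
    (hC : ((1 : Matrix (Fin m) (Fin m) ℂ) - C).PosSemidef) :
    (C * B).trace.re ≤ B.trace.re := by
  have h0 : 0 ≤ (((1 : Matrix (Fin m) (Fin m) ℂ) - C) * B).trace.re :=
    trace_mul_psd_re_nonneg hC hB
  rw [Matrix.sub_mul, Matrix.one_mul, Matrix.trace_sub, Complex.sub_re] at h0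
  linarith

/-- Cauchy–Schwarz for the trace inner product -/
lemma trace_cs (X Y : Matrix (Fin m) (Fin m) ℂ) :
    (Xᴴ * Y).trace.re ≤ Real.sqrt ((Xᴴ * X).trace.re) * Real.sqrt ((Yᴴ * Y).trace.re) := by
  have htr : ∀ Z W : Matrix (Fin m) (Fin m) ℂ, (Zᴴ * W).trace.re
      = ∑ p : Fin m × Fin m, ((starRingEnd ℂ) (Z p.1 p.2) * W p.1 p.2).re := by
    intro Z W
    rw [Matrix.trace, Complex.re_sum, Fintype.sum_prod_type, Finset.sum_comm]
    refine Finset.sum_congr rfl fun j _ => ?_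
    rw [Matrix.diag_apply, Matrix.mul_apply, Complex.re_sum]
    exact Finset.sum_congr rfl fun i _ => by rw [Matrix.conjTranspose_apply, RCLike.star_def]
  have htr2 : ∀ Z : Matrix (Fin m) (Fin m) ℂ, (Zᴴ * Z).trace.re
      = ∑ p : Fin m × Fin m, ‖(Z p.1 p.2)‖ ^ 2 := by
    intro Z
    rw [htr]
    refine Finset.sum_congr rfl fun p _ => ?_
    rw [Complex.mul_re, Complex.sq_norm, Complex.normSq_apply]
    simp [Complex.conj_re, Complex.conj_im]
  calc (Xᴴ * Y).trace.re = ∑ p : Fin m × Fin m, ((starRingEnd ℂ) (X p.1 p.2) * Y p.1 p.2).re :=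
        htr X Y
    _ ≤ ∑ p : Fin m × Fin m, ‖(X p.1 p.2)‖ * ‖(Y p.1 p.2)‖ := by
        refine Finset.sum_le_sum fun p _ => ?_
        refine (Complex.re_le_norm _).trans ?_
        rw [norm_mul, Complex.norm_conj]
    _ ≤ Real.sqrt (∑ p : Fin m × Fin m, ‖(X p.1 p.2)‖ ^ 2)
        * Real.sqrt (∑ p : Fin m × Fin m, ‖(Y p.1 p.2)‖ ^ 2) :=
        Real.sum_mul_le_sqrt_mul_sqrt _ _ _
    _ = _ := by rw [← htr2, ← htr2]

lemma conj_mul {V : Matrix (Fin m) (Fin m) ℂ} (hV : star V * V = 1)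
    (d e : Fin m → ℂ) :
    (V * diagonal d * star V) * (V * diagonal e * star V)
      = V * diagonal (fun i => d i * e i) * star V := by
  have h1 : V * diagonal d * star V * (V * diagonal e * star V)
      = V * (diagonal d * (star V * V) * diagonal e) * star V := by
    simp only [Matrix.mul_assoc]
  rw [h1, hV, Matrix.mul_one, Matrix.diagonal_mul_diagonal]

lemma trace_conj {V : Matrix (Fin m) (Fin m) ℂ} (hV : star V * V = 1) (d : Fin m → ℂ) :
    (V * diagonal d * star V).trace = ∑ i, d i := by
  rw [Matrix.trace_mul_cycle, hV, Matrix.one_mul, Matrix.trace_diagonal]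

lemma conj_conjTranspose {V : Matrix (Fin m) (Fin m) ℂ} (d : Fin m → ℂ)
    (hd : ∀ i, star (d i) = d i) :
    (V * diagonal d * star V)ᴴ = V * diagonal d * star V := by
  rw [Matrix.conjTranspose_mul, Matrix.conjTranspose_mul, ← Matrix.star_eq_conjTranspose V,
    ← Matrix.star_eq_conjTranspose (star V), star_star, Matrix.diagonal_conjTranspose,
    Matrix.mul_assoc]
  have hsd : star d = d := funext fun i => hd i
  rw [hsd]

lemma conj_posSemidef {V : Matrix (Fin m) (Fin m) ℂ} (d : Fin m → ℝ)
    (hd : ∀ i, 0 ≤ d i) :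
    (V * diagonal (fun i => (d i : ℂ)) * star V).PosSemidef := by
  have hD : (diagonal (fun i => (d i : ℂ))).PosSemidef :=
    Matrix.posSemidef_diagonal_iff.mpr fun i => Complex.zero_le_real.mpr (hd i)
  have := hD.mul_mul_conjTranspose_same V
  rwa [← Matrix.star_eq_conjTranspose] at this

lemma exists_partial_isometry (A : Matrix (Fin m) (Fin m) ℂ) :
    ∃ W : Matrix (Fin m) (Fin m) ℂ,
      Wᴴ * A = psdSqrt (Aᴴ * A) ∧
        ((1 : Matrix (Fin m) (Fin m) ℂ) - W * Wᴴ)ᴴ = 1 - W * Wᴴ ∧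
        ((1 : Matrix (Fin m) (Fin m) ℂ) - W * Wᴴ) * (1 - W * Wᴴ) = 1 - W * Wᴴ := by
  have hH : (Aᴴ * A).PosSemidef := Matrix.posSemidef_conjTranspose_mul_self A
  set V : Matrix (Fin m) (Fin m) ℂ := (hH.1.eigenvectorUnitary : Matrix (Fin m) (Fin m) ℂ)
    with hVdef
  set μ : Fin m → ℝ := hH.1.eigenvalues with hμdef
  have hμ : ∀ i, 0 ≤ μ i := fun i => hH.eigenvalues_nonneg i
  have hV : star V * V = 1 := Matrix.mem_unitaryGroup_iff'.mp hH.1.eigenvectorUnitary.2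
  have hspec : Aᴴ * A = V * diagonal (Complex.ofReal ∘ μ) * star V := hH.1.spectral_theorem
  set g : Fin m → ℂ := fun i => if μ i = 0 then 0 else ((Real.sqrt (μ i))⁻¹ : ℂ) with hgdef
  have hgstar : ∀ i, star (g i) = g i := by
    intro i
    by_cases h : μ i = 0 <;> simp [hgdef, h, ← Complex.ofReal_inv]
  set M : Matrix (Fin m) (Fin m) ℂ := V * diagonal g * star V with hMdef
  have hM : Mᴴ = M := conj_conjTranspose g hgstar
  -- the square root of Aᴴ * A
  set S : Matrix (Fin m) (Fin m) ℂ :=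
    V * diagonal (fun i => (Real.sqrt (μ i) : ℂ)) * star V with hSdef
  have hS : S.PosSemidef := conj_posSemidef _ fun i => Real.sqrt_nonneg _
  have hSS : S ^ 2 = Aᴴ * A := by
    have hfun : (fun i => (Real.sqrt (μ i) : ℂ) * (Real.sqrt (μ i) : ℂ))
        = Complex.ofReal ∘ μ := by
      funext i
      rw [← Complex.ofReal_mul, Real.mul_self_sqrt (hμ i)]
      rfl
    rw [pow_two, hSdef, conj_mul hV, hfun, ← hspec]
  have hSsqrt : psdSqrt (Aᴴ * A) = S := by
    rw [psdSqrt_eq hH, CFC.sqrt_eq_iff _ _ hH.nonneg hS.nonneg, ← pow_two, hSS]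
  refine ⟨A * M, ?_, ?_, ?_⟩
  · -- Wᴴ * A = psdSqrt (Aᴴ * A)
    have h1 : (A * M)ᴴ * A = M * (Aᴴ * A) := by
      rw [Matrix.conjTranspose_mul, hM, Matrix.mul_assoc]
    rw [h1, hSsqrt, hMdef]
    conv_lhs => rw [hspec]
    rw [conj_mul hV, hSdef]
    have hfun2 : (fun i => g i * (Complex.ofReal ∘ μ) i)
        = fun i => (Real.sqrt (μ i) : ℂ) := by
      funext i
      simp only [hgdef, Function.comp_apply]
      by_cases h : μ i = 0
      · simp [h]
      · have hs : Real.sqrt (μ i) ≠ 0 :=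
          Real.sqrt_ne_zero'.mpr (lt_of_le_of_ne (hμ i) (Ne.symm h))
        have hs' : (Real.sqrt (μ i) : ℂ) ≠ 0 := by exact_mod_cast hs
        rw [if_neg h, inv_mul_eq_iff_eq_mul₀ hs', ← Complex.ofReal_mul,
          Real.mul_self_sqrt (hμ i)]
    rw [hfun2]
  · -- Hermitian
    have h2 := Matrix.isHermitian_mul_conjTranspose_self (A * M)
    rw [Matrix.conjTranspose_sub, Matrix.conjTranspose_one, h2]
  · -- idempotent
    set X : Matrix (Fin m) (Fin m) ℂ := A * M * (A * M)ᴴ with hXdef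
    have hXX : X * X = X := by
      have hMA : (A * M)ᴴ = M * Aᴴ := by rw [Matrix.conjTranspose_mul, hM]
      have hN : M * M = V * diagonal (fun i => g i * g i) * star V := conj_mul hV g g
      have key : (V * diagonal (fun i => g i * g i) * star V) * (Aᴴ * A)
          * (V * diagonal (fun i => g i * g i) * star V)
          = V * diagonal (fun i => g i * g i) * star V := by
        rw [hspec, conj_mul hV, conj_mul hV]
        have hfun3 : (fun i => (g i * g i) * (Complex.ofReal ∘ μ) i * (g i * g i))
            = fun i => g i * g i := by
          funext i
          simp only [hgdef, Function.comp_apply]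
          by_cases h : μ i = 0
          · simp [h]
          · have hs : Real.sqrt (μ i) ≠ 0 :=
              Real.sqrt_ne_zero'.mpr (lt_of_le_of_ne (hμ i) (Ne.symm h))
            have hs' : (Real.sqrt (μ i) : ℂ) ≠ 0 := by exact_mod_cast hs
            have hss : (Real.sqrt (μ i) : ℂ) * (Real.sqrt (μ i) : ℂ) = ((μ i : ℝ) : ℂ) := by
              rw [← Complex.ofReal_mul, Real.mul_self_sqrt (hμ i)]
            rw [if_neg h, ← hss]
            field_simp
        rw [hfun3]
      calc X * X = A * (M * M * (Aᴴ * A) * (M * M)) * Aᴴ := by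
            rw [hXdef, hMA]; simp only [Matrix.mul_assoc]
        _ = A * (M * M) * Aᴴ := by rw [hN, key]
        _ = X := by rw [hXdef, hMA]; simp only [Matrix.mul_assoc]
    simp only [Matrix.sub_mul, Matrix.mul_sub, Matrix.one_mul, Matrix.mul_one, hXX]
    abel

/-- The trace distance is realized by the spectral projection onto the positive part. -/
lemma spectral_projection {ρ σ : Matrix (Fin m) (Fin m) ℂ} (hρ : ρ.PosSemidef)
    (hσ : σ.PosSemidef) (hρ1 : ρ.trace = 1) (hσ1 : σ.trace = 1) :
    ∃ P : Matrix (Fin m) (Fin m) ℂ, Pᴴ = P ∧ P * P = P ∧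
      traceDist ρ σ = ((ρ - σ) * P).trace.re := by
  set Δ : Matrix (Fin m) (Fin m) ℂ := ρ - σ with hΔdef
  have hΔ : Δ.IsHermitian := hρ.1.sub hσ.1
  set V : Matrix (Fin m) (Fin m) ℂ := (hΔ.eigenvectorUnitary : Matrix (Fin m) (Fin m) ℂ)
    with hVdef
  set μ : Fin m → ℝ := hΔ.eigenvalues with hμdef
  have hV : star V * V = 1 := Matrix.mem_unitaryGroup_iff'.mp hΔ.eigenvectorUnitary.2
  have hspec : Δ = V * diagonal (Complex.ofReal ∘ μ) * star V := hΔ.spectral_theorem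
  set d : Fin m → ℂ := fun i => if 0 < μ i then (1 : ℂ) else 0 with hddef
  refine ⟨V * diagonal d * star V, conj_conjTranspose d ?_, ?_, ?_⟩
  · intro i; by_cases h : 0 < μ i <;> simp [hddef, h]
  · rw [conj_mul hV]
    have : (fun i => d i * d i) = d := by
      funext i; by_cases h : 0 < μ i <;> simp [hddef, h]
    rw [this]
  · -- trace distance computation
    have habs : Δᴴ * Δ = V * diagonal (fun i => ((μ i : ℝ) : ℂ) * ((μ i : ℝ) : ℂ)) * star V := by
      rw [hΔ.eq]
      conv_lhs => rw [hspec]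
      rw [conj_mul hV]
      rfl
    set T : Matrix (Fin m) (Fin m) ℂ := V * diagonal (fun i => ((|μ i| : ℝ) : ℂ)) * star V
      with hTdef
    have hT : T.PosSemidef := conj_posSemidef _ fun i => abs_nonneg _
    have hTT : T ^ 2 = Δᴴ * Δ := by
      rw [pow_two, hTdef, conj_mul hV, habs]
      have : (fun i => ((|μ i| : ℝ) : ℂ) * ((|μ i| : ℝ) : ℂ))
          = fun i => ((μ i : ℝ) : ℂ) * ((μ i : ℝ) : ℂ) := by
        funext i
        rw [← Complex.ofReal_mul, ← Complex.ofReal_mul, abs_mul_abs_self]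
      rw [this]
    have hPSDΔ : (Δᴴ * Δ).PosSemidef := Matrix.posSemidef_conjTranspose_mul_self Δ
    have hsqrtT : psdSqrt (Δᴴ * Δ) = T := by
      rw [psdSqrt_eq hPSDΔ, CFC.sqrt_eq_iff _ _ hPSDΔ.nonneg hT.nonneg, ← pow_two, hTT]
    -- sum of eigenvalues is zero
    have htraceΔ : Δ.trace = 0 := by
      rw [hΔdef, Matrix.trace_sub, hρ1, hσ1, sub_self]
    have hsum : ∑ i, μ i = 0 := by
      have h1 : Δ.trace = ∑ i, ((μ i : ℝ) : ℂ) := by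
        conv_lhs => rw [hspec]
        rw [trace_conj hV]
        rfl
      have h2 := congrArg Complex.re (h1.symm.trans htraceΔ)
      rwa [Complex.re_sum] at h2
    -- trace of Δ * P
    have hΔP : (Δ * (V * diagonal d * star V)).trace.re
        = ∑ i, (if 0 < μ i then μ i else 0) := by
      conv_lhs => rw [hspec]
      rw [conj_mul hV, trace_conj hV, Complex.re_sum]
      refine Finset.sum_congr rfl fun i _ => ?_
      by_cases h : 0 < μ i <;> simp [hddef, h]
    have hTtr : (psdSqrt (Δᴴ * Δ)).trace.re = ∑ i, |μ i| := by
      rw [hsqrtT, hTdef, trace_conj hV, Complex.re_sum]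
      exact Finset.sum_congr rfl fun i _ => Complex.ofReal_re _
    rw [traceDist, ← hΔdef, hTtr, hΔP]
    have hptw : ∀ i, |μ i| = 2 * (if 0 < μ i then μ i else 0) - μ i := by
      intro i
      by_cases h : 0 < μ i
      · rw [if_pos h, abs_of_pos h]; ring
      · rw [if_neg h, abs_of_nonpos (le_of_not_gt h)]; ring
    rw [Finset.sum_congr rfl fun i _ => hptw i]
    rw [Finset.sum_sub_distrib, hsum, ← Finset.mul_sum]
    ring

/-- the key Cauchy–Schwarz bound for one projection term -/
lemma term_bound {ρ σ : Matrix (Fin m) (Fin m) ℂ} (hρ : ρ.PosSemidef) (hσ : σ.PosSemidef)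
    (W Q : Matrix (Fin m) (Fin m) ℂ)
    (hW : ((1 : Matrix (Fin m) (Fin m) ℂ) - W * Wᴴ).PosSemidef)
    (hQh : Qᴴ = Q) (hQ2 : Q * Q = Q) :
    (Wᴴ * psdSqrt σ * Q * psdSqrt ρ).trace.re ≤
      Real.sqrt ((σ * Q).trace.re) * Real.sqrt ((ρ * Q).trace.re) := by
  set sρ := psdSqrt ρ with hsρdef
  set sσ := psdSqrt σ with hsσdef
  have hsρ : sρ.PosSemidef := psdSqrt_posSemidef hρ
  have hsσ : sσ.PosSemidef := psdSqrt_posSemidef hσ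
  have hmulρ : sρ * sρ = ρ := psdSqrt_mul_self hρ
  have hmulσ : sσ * sσ = σ := psdSqrt_mul_self hσ
  have hQpsd : Q.PosSemidef := hermIdem_posSemidef hQh hQ2
  set X := Q * sσ * W with hXdef
  set Y := Q * sρ with hYdef
  have hXh : Xᴴ = Wᴴ * sσ * Q := by
    rw [hXdef, Matrix.conjTranspose_mul, Matrix.conjTranspose_mul, hsσ.1, hQh,
      ← Matrix.mul_assoc]
  have hXY : Xᴴ * Y = Wᴴ * sσ * Q * sρ := by
    rw [hXh, hYdef]
    have h : Q * (Q * sρ) = Q * sρ := by rw [← Matrix.mul_assoc, hQ2]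
    simp only [Matrix.mul_assoc]
    rw [h]
  -- trace of Xᴴ X
  have hXX : Xᴴ * X = Wᴴ * (sσ * Q * sσ) * W := by
    rw [hXh, hXdef]
    have h : Q * (Q * (sσ * W)) = Q * (sσ * W) := by rw [← Matrix.mul_assoc, hQ2]
    simp only [Matrix.mul_assoc]
    rw [h]
  have hBpsd : (sσ * Q * sσ).PosSemidef := by
    have := hQpsd.conjTranspose_mul_mul_same sσ
    rwa [hsσ.1] at this
  have hXXle : (Xᴴ * X).trace.re ≤ (σ * Q).trace.re := by
    have h1 : (Xᴴ * X).trace = ((W * Wᴴ) * (sσ * Q * sσ)).trace := by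
      rw [hXX, Matrix.trace_mul_cycle]
    have h2 : ((W * Wᴴ) * (sσ * Q * sσ)).trace.re ≤ (sσ * Q * sσ).trace.re :=
      trace_contract hBpsd hW
    have h3 : (sσ * Q * sσ).trace = (σ * Q).trace := by
      rw [Matrix.trace_mul_cycle, hmulσ]
    rw [h1, ← h3]
    exact h2
  have hYY : (Yᴴ * Y).trace = (ρ * Q).trace := by
    have hYh : Yᴴ = sρ * Q := by rw [hYdef, Matrix.conjTranspose_mul, hsρ.1, hQh]
    have h : Yᴴ * Y = sρ * Q * sρ := by
      rw [hYh, hYdef]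
      have h' : Q * (Q * sρ) = Q * sρ := by rw [← Matrix.mul_assoc, hQ2]
      simp only [Matrix.mul_assoc]
      rw [h']
    rw [h, Matrix.trace_mul_cycle, hmulρ]
  calc (Wᴴ * sσ * Q * sρ).trace.re = (Xᴴ * Y).trace.re := by rw [hXY]
    _ ≤ Real.sqrt ((Xᴴ * X).trace.re) * Real.sqrt ((Yᴴ * Y).trace.re) := trace_cs X Y
    _ ≤ Real.sqrt ((σ * Q).trace.re) * Real.sqrt ((ρ * Q).trace.re) := by
        rw [hYY]
        exact mul_le_mul_of_nonneg_right (Real.sqrt_le_sqrt hXXle) (Real.sqrt_nonneg _)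

/-- the purely real final inequality -/
lemma final_ineq {a b F : ℝ} (ha0 : 0 ≤ a) (ha1 : a ≤ 1) (hb0 : 0 ≤ b) (hb1 : b ≤ 1)
    (hF0 : 0 ≤ F)
    (hF : F ≤ Real.sqrt b * Real.sqrt a + Real.sqrt (1 - b) * Real.sqrt (1 - a)) :
    a - b ≤ Real.sqrt (1 - F ^ 2) := by
  set G := Real.sqrt b * Real.sqrt a + Real.sqrt (1 - b) * Real.sqrt (1 - a) with hGdef
  have hG0 : 0 ≤ G := by positivity
  have ha : Real.sqrt a ^ 2 = a := Real.sq_sqrt ha0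
  have hb : Real.sqrt b ^ 2 = b := Real.sq_sqrt hb0
  have ha' : Real.sqrt (1 - a) ^ 2 = 1 - a := Real.sq_sqrt (by linarith)
  have hb' : Real.sqrt (1 - b) ^ 2 = 1 - b := Real.sq_sqrt (by linarith)
  have hkey : (a - b) ^ 2 + G ^ 2 ≤ 1 := by
    have hamgm := sq_nonneg (Real.sqrt a * Real.sqrt (1 - a) - Real.sqrt b * Real.sqrt (1 - b))
    nlinarith [ha, hb, ha', hb', hamgm]
  have hFG : F ^ 2 ≤ G ^ 2 := by nlinarith
  have h1 : (a - b) ^ 2 ≤ 1 - F ^ 2 := by nlinarith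
  by_cases hab : a - b ≤ 0
  · exact hab.trans (Real.sqrt_nonneg _)
  · have h2 := Real.sqrt_le_sqrt h1
    rwa [Real.sqrt_sq (le_of_not_ge hab)] at h2

end FvG

/-- For any two density matrices, the trace distance is at most the square root of one minus
the squared fidelity. -/
theorem traceDist_le_sqrt_one_sub_fidelity_sq {m : ℕ} (ρ σ : Matrix (Fin m) (Fin m) ℂ)
    (hρ : ρ.PosSemidef) (hσ : σ.PosSemidef) (hρ1 : ρ.trace = 1) (hσ1 : σ.trace = 1) :
    traceDist ρ σ ≤ Real.sqrt (1 - fidelity ρ σ ^ 2) := by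
  open Matrix in
  obtain ⟨P, hPh, hP2, hTD⟩ := FvG.spectral_projection hρ hσ hρ1 hσ1
  have hPpsd : P.PosSemidef := FvG.hermIdem_posSemidef hPh hP2
  have hQh : ((1 : Matrix (Fin m) (Fin m) ℂ) - P)ᴴ = 1 - P := by
    rw [Matrix.conjTranspose_sub, hPh, Matrix.conjTranspose_one]
  have hQ2 : ((1 : Matrix (Fin m) (Fin m) ℂ) - P) * (1 - P) = 1 - P := by
    rw [Matrix.sub_mul, Matrix.mul_sub, Matrix.mul_sub, hP2]
    simp
  have hQpsd : ((1 : Matrix (Fin m) (Fin m) ℂ) - P).PosSemidef :=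
    FvG.hermIdem_posSemidef hQh hQ2
  set a := (ρ * P).trace.re with hadef
  set b := (σ * P).trace.re with hbdef
  have ha0 : 0 ≤ a := FvG.trace_mul_psd_re_nonneg hρ hPpsd
  have hb0 : 0 ≤ b := FvG.trace_mul_psd_re_nonneg hσ hPpsd
  have hρQ : (ρ * (1 - P)).trace.re = 1 - a := by
    rw [Matrix.mul_sub, Matrix.mul_one, Matrix.trace_sub, Complex.sub_re, hρ1, hadef]
    norm_num
  have hσQ : (σ * (1 - P)).trace.re = 1 - b := by
    rw [Matrix.mul_sub, Matrix.mul_one, Matrix.trace_sub, Complex.sub_re, hσ1, hbdef]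
    norm_num
  have ha1 : a ≤ 1 := by
    have := FvG.trace_mul_psd_re_nonneg hρ hQpsd
    rw [hρQ] at this; linarith
  have hb1 : b ≤ 1 := by
    have := FvG.trace_mul_psd_re_nonneg hσ hQpsd
    rw [hσQ] at this; linarith
  -- trace distance = a - b
  have hTD' : traceDist ρ σ = a - b := by
    rw [hTD, Matrix.sub_mul, Matrix.trace_sub, Complex.sub_re]
  -- fidelity
  set sρ := psdSqrt ρ with hsρdef
  set sσ := psdSqrt σ with hsσdef
  have hsρ : sρ.PosSemidef := FvG.psdSqrt_posSemidef hρ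
  have hsσ : sσ.PosSemidef := FvG.psdSqrt_posSemidef hσ
  have hmulσ : sσ * sσ = σ := FvG.psdSqrt_mul_self hσ
  set A := sσ * sρ with hAdef
  have hAA : Aᴴ * A = sρ * σ * sρ := by
    rw [hAdef, Matrix.conjTranspose_mul, hsρ.1, hsσ.1]
    have : sρ * sσ * (sσ * sρ) = sρ * (sσ * sσ) * sρ := by simp only [Matrix.mul_assoc]
    rw [this, hmulσ]
  obtain ⟨W, hW1, hWh, hWidem⟩ := FvG.exists_partial_isometry A
  have hWpsd : ((1 : Matrix (Fin m) (Fin m) ℂ) - W * Wᴴ).PosSemidef :=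
    FvG.hermIdem_posSemidef hWh hWidem
  have hF : fidelity ρ σ = (Wᴴ * A).trace.re := by
    rw [fidelity, ← hsρdef, ← hAA, ← hW1]
  -- split the fidelity
  have hsplit : Wᴴ * A = Wᴴ * sσ * P * sρ + Wᴴ * sσ * (1 - P) * sρ := by
    have h1 : Wᴴ * sσ * P * sρ + Wᴴ * sσ * (1 - P) * sρ
        = Wᴴ * sσ * (P + (1 - P)) * sρ := by
      rw [Matrix.mul_add, Matrix.add_mul]
    rw [h1]
    have h2 : P + ((1 : Matrix (Fin m) (Fin m) ℂ) - P) = 1 := by abel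
    rw [h2, Matrix.mul_one, hAdef, Matrix.mul_assoc]
  have hFle : fidelity ρ σ ≤ Real.sqrt b * Real.sqrt a
      + Real.sqrt (1 - b) * Real.sqrt (1 - a) := by
    rw [hF, hsplit, Matrix.trace_add, Complex.add_re]
    have h1 := FvG.term_bound hρ hσ W P hWpsd hPh hP2
    have h2 := FvG.term_bound hρ hσ W (1 - P) hWpsd hQh hQ2
    rw [hρQ, hσQ] at h2
    rw [← hsρdef, ← hsσdef] at h1 h2
    rw [← hadef, ← hbdef] at h1
    exact add_le_add h1 h2
  have hF0 : 0 ≤ fidelity ρ σ := by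
    have hPSD : (psdSqrt ρ * σ * psdSqrt ρ).PosSemidef := by
      have := hσ.conjTranspose_mul_mul_same (psdSqrt ρ)
      rwa [(FvG.psdSqrt_posSemidef hρ).1] at this
    rw [fidelity]
    exact FvG.trace_re_nonneg (FvG.psdSqrt_posSemidef hPSD)
  rw [hTD']
  exact FvG.final_ineq ha0 ha1 hb0 hb1 hF0 hFle
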